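/- Let s ≥ 1 be an integer, A a finite alphabet with |A| ≥ 2, and C ⊆ A^{s+2} a code that is 1-error correctable for the network N_s. Then for every c_2 ∈ A^{s+1} one has |τ(c_2)| ≤ min(|A|, s+1). -/

import Mathlib

open Finset

/-- The "fan" of a codeword `c` under the network code `(F1, F2)` for the network `N_s`:
the set of possible outputs at the terminal when the adversary changes at most one
of the `s+2` symbols sent by the source. -/
def fan {A : Type*} [Fintype A] [DecidableEq A] (s : ℕ)
    (F1 : A → A) (F2 : (Fin (s + 1) → A) → Fin s → A)
    (c : Fin (s + 2) → A) : Finset (A × (Fin s → A)) :=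
  (Finset.univ.filter fun x : Fin (s + 2) → A => hammingDist x c ≤ 1).image
    fun x => (F1 (x 0), F2 fun i => x i.succ)

/-- A code `C ⊆ A^{s+2}` is 1-error correctable for the network `N_s` if there are
functions `F1 : A → A` and `F2 : A^{s+1} → A^s` such that the fans of distinct
codewords are disjoint. -/
def OneErrCorr {A : Type*} [Fintype A] [DecidableEq A] (s : ℕ)
    (C : Finset (Fin (s + 2) → A)) : Prop :=
  ∃ (F1 : A → A) (F2 : (Fin (s + 1) → A) → Fin s → A),
    ∀ c ∈ C, ∀ c' ∈ C, c ≠ c' → Disjoint (fan s F1 F2 c) (fan s F1 F2 c')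

/-- `tau s C c2` is the set of codewords of `C` whose last `s+1` coordinates are at
Hamming distance at most 1 from `c2`. -/
def tau {A : Type*} [Fintype A] [DecidableEq A] (s : ℕ)
    (C : Finset (Fin (s + 2) → A)) (c2 : Fin (s + 1) → A) :
    Finset (Fin (s + 2) → A) :=
  C.filter fun c => hammingDist c2 (fun i => c i.succ) ≤ 1

lemma hd_cons {A : Type*} [DecidableEq A] {n : ℕ} (a b : A) (u v : Fin n → A) :
    hammingDist (Fin.cons a u : Fin (n + 1) → A) (Fin.cons b v) =
      (if a = b then 0 else 1) + hammingDist u v := by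
  simp only [hammingDist, Finset.card_filter, Fin.sum_univ_succ, Fin.cons_zero, Fin.cons_succ]
  by_cases h : a = b <;> simp [h]

lemma mem_fan_of_close {A : Type*} [Fintype A] [DecidableEq A] {s : ℕ}
    (F1 : A → A) (F2 : (Fin (s + 1) → A) → Fin s → A)
    {x c : Fin (s + 2) → A} (h : hammingDist x c ≤ 1) :
    (F1 (x 0), F2 fun i => x i.succ) ∈ fan s F1 F2 c := by
  simp only [fan, Finset.mem_image, Finset.mem_filter, Finset.mem_univ, true_and]
  exact ⟨x, h, rfl⟩

theorem tau_card_le_min {A : Type*} [Fintype A] [DecidableEq A]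
    (s : ℕ) (hs : 1 ≤ s) (hA : 2 ≤ Fintype.card A)
    (C : Finset (Fin (s + 2) → A)) (hC : OneErrCorr s C) :
    ∀ c2 : Fin (s + 1) → A, (tau s C c2).card ≤ min (Fintype.card A) (s + 1) := by
  intro c2
  obtain ⟨F1, F2, hdisj⟩ := hC
  have htau : ∀ c ∈ tau s C c2, c ∈ C ∧ hammingDist c2 (Fin.tail c) ≤ 1 := by
    intro c hc
    exact Finset.mem_filter.mp hc
  -- key: fans of distinct codewords in tau intersect if a common nearby point exists
  have key : ∀ c ∈ tau s C c2, ∀ c' ∈ tau s C c2, c ≠ c' →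
      ∀ x : Fin (s + 2) → A, hammingDist x c ≤ 1 → hammingDist x c' ≤ 1 → False := by
    intro c hc c' hc' hne x h1 h2
    have hd := hdisj c (htau c hc).1 c' (htau c' hc').1 hne
    exact Finset.disjoint_left.mp hd (mem_fan_of_close F1 F2 h1) (mem_fan_of_close F1 F2 h2)
  -- Bound 1 : card ≤ |A| via injectivity of c ↦ c 0
  have hclose : ∀ c ∈ tau s C c2, ∀ a : A,
      hammingDist (Fin.cons a c2 : Fin (s + 2) → A) c ≤ 1 ↔ (if a = c 0 then 0 else 1) + hammingDist c2 (Fin.tail c) ≤ 1 := by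
    intro c _ a
    rw [← Fin.cons_self_tail c, hd_cons]
    simp [Fin.cons_self_tail]
  have hinj1 : Set.InjOn (fun c => c 0) (tau s C c2 : Set (Fin (s + 2) → A)) := by
    intro c hc c' hc' heq
    by_contra hne
    simp only [Finset.mem_coe] at hc hc'
    refine key c hc c' hc' hne (Fin.cons (c 0) c2) ?_ ?_
    · rw [(hclose c hc (c 0))]; simpa using (htau c hc).2
    · rw [(hclose c' hc' (c 0))]
      simpa [heq] using (htau c' hc').2
  have b1 : (tau s C c2).card ≤ Fintype.card A := by
    calc (tau s C c2).card = ((tau s C c2).image fun c => c 0).card :=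
          (Finset.card_image_of_injOn hinj1).symm
      _ ≤ Fintype.card A := by
          simpa using Finset.card_le_card (Finset.subset_univ _)
  -- distinct codewords in tau have tails at Hamming distance ≥ 2
  have tails : ∀ c ∈ tau s C c2, ∀ c' ∈ tau s C c2, c ≠ c' →
      ¬ hammingDist (Fin.tail c) (Fin.tail c') ≤ 1 := by
    intro c hc c' hc' hne hle
    refine key c hc c' hc' hne (Fin.cons (c' 0) (Fin.tail c)) ?_ ?_
    · rw [← Fin.cons_self_tail c, hd_cons, Fin.cons_self_tail]
      have : hammingDist (Fin.tail c) (Fin.tail c) = 0 := hammingDist_self _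
      rw [this]
      split <;> omega
    · rw [← Fin.cons_self_tail c', hd_cons, Fin.cons_self_tail]
      simpa using hle
  -- Bound 2 : card ≤ s + 1
  have b2 : (tau s C c2).card ≤ s + 1 := by
    by_cases hsmall : (tau s C c2).card ≤ 1
    · omega
    push_neg at hsmall
    -- every tail differs from c2
    have hne2 : ∀ c ∈ tau s C c2, Fin.tail c ≠ c2 := by
      intro c hc habs
      obtain ⟨c', hc', hcc'⟩ := Finset.exists_mem_ne hsmall c
      refine tails c' hc' c hc hcc' ?_
      rw [habs, hammingDist_comm]
      exact (htau c' hc').2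
    -- assign to each codeword the coordinate where its tail differs from c2
    have hex : ∀ c ∈ tau s C c2, ∃ i : Fin (s + 1), Fin.tail c i ≠ c2 i := by
      intro c hc
      by_contra habs
      push_neg at habs
      exact hne2 c hc (funext habs)
    choose f hf using hex
    -- off the chosen coordinate the tail agrees with c2
    have hoff : ∀ c (hc : c ∈ tau s C c2), ∀ j, j ≠ f c hc → Fin.tail c j = c2 j := by
      intro c hc j hj
      by_contra habs
      have h1 := (htau c hc).2
      have hsub : ({f c hc, j} : Finset (Fin (s + 1))) ⊆
          Finset.univ.filter fun i => c2 i ≠ Fin.tail c i := by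
        intro k hk
        simp only [Finset.mem_insert, Finset.mem_singleton] at hk
        rcases hk with rfl | rfl
        · simp [Ne.symm (hf c hc)]
        · simp only [Finset.mem_filter, Finset.mem_univ, true_and]
          exact fun h => habs h.symm
      have hcard : 2 ≤ hammingDist c2 (Fin.tail c) := by
        have := Finset.card_le_card hsub
        rwa [Finset.card_insert_of_notMem (by simpa using (Ne.symm hj)),
          Finset.card_singleton] at this
      omega
    -- this assignment is injective
    have hinj2 : ∀ c (hc : c ∈ tau s C c2), ∀ c' (hc' : c' ∈ tau s C c2),
        f c hc = f c' hc' → c = c' := by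
      intro c hc c' hc' heq
      by_contra hne
      refine tails c hc c' hc' hne ?_
      have hsub : (Finset.univ.filter fun i => Fin.tail c i ≠ Fin.tail c' i)
          ⊆ {f c hc} := by
        intro k hk
        simp only [Finset.mem_filter, Finset.mem_univ, true_and] at hk
        simp only [Finset.mem_singleton]
        by_contra hkne
        have h1 := hoff c hc k hkne
        have h2 := hoff c' hc' k (by rw [← heq]; exact hkne)
        exact hk (h1.trans h2.symm)
      calc hammingDist (Fin.tail c) (Fin.tail c') ≤ ({f c hc} : Finset _).card :=
            Finset.card_le_card hsub
        _ = 1 := Finset.card_singleton _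
    -- conclude by counting the image
    classical
    have hmain : (tau s C c2).card ≤ (Finset.univ : Finset (Fin (s + 1))).card := by
      refine Finset.card_le_card_of_injOn
        (fun c => if hc : c ∈ tau s C c2 then f c hc else 0)
        (fun c _ => Finset.mem_univ _) ?_
      intro c hc c' hc' heq
      simp only [Finset.mem_coe] at hc hc'
      exact hinj2 c hc c' hc' (by simpa [dif_pos hc, dif_pos hc'] using heq)
    simpa using hmain
  exact le_min b1 b2
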